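/- For q = kd/2 and any even partition Q of the index set 𝓘 = {(j,s) : j ∈ [2ℓ], s ∈ [d]}, and any Q-valid collection of tuples {I_j} ⊂ [n]^q, the number of collections of permutations {σ_j}_{j=1}^{2ℓ} ⊂ S_q such that Par({I_j}, {id}, {σ_j}) = Q is at most (kd/2)^{k|Q|/2} · ∏_{j=1}^{2ℓ} hist(I_j)!. -/

import Mathlib

/-- `hist(I)!`, the product of factorials of the multiplicities in the tuple `I`. -/
def histFact {n : ℕ} {ι : Type*} [Fintype ι] [DecidableEq ι] (I : ι → Fin n) : ℕ :=
  ∏ i : Fin n, (Finset.univ.filter (fun j => I j = i)).card.factorial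

/-- The key of an index `(j,s)`: the unordered pair `{U_{j,s}, σ_j(U_{j+1,s})}`
of `(k/2)`-tuples, where `I_j = (U_{j,1},…,U_{j,d})` and `j+1` is cyclic in `Fin (2ℓ)`. -/
def pairKey {n k d l : ℕ} [NeZero (2 * l)]
    (Is : Fin (2 * l) → (Fin d × Fin (k / 2) → Fin n))
    (σ : Fin (2 * l) → Equiv.Perm (Fin d × Fin (k / 2)))
    (p : Fin (2 * l) × Fin d) : Sym2 (Fin (k / 2) → Fin n) :=
  Sym2.mk (fun t => Is p.1 (p.2, t)) (fun t => Is (p.1 + 1) (σ p.1 (p.2, t)))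

/-- `Par({I_j},{id},{σ_j})`: the partition of `{(j,s) : j ∈ [2ℓ], s ∈ [d]}` induced by
equality (up to swap) of the pairs `(U_{j,s}, σ_j(U_{j+1,s}))`. -/
def Par {n k d l : ℕ} [NeZero (2 * l)]
    (Is : Fin (2 * l) → (Fin d × Fin (k / 2) → Fin n))
    (σ : Fin (2 * l) → Equiv.Perm (Fin d × Fin (k / 2))) :
    Setoid (Fin (2 * l) × Fin d) :=
  Setoid.ker (pairKey Is σ)

section Aux

variable {n k d l : ℕ} [NeZero (2 * l)]
variable (Is : Fin (2 * l) → (Fin d × Fin (k / 2) → Fin n))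

/-- The collection `J_j = I_{j+1} ∘ σ_j`. -/
def Jmap (σ : Fin (2 * l) → Equiv.Perm (Fin d × Fin (k / 2))) :
    Fin (2 * l) → Fin d × Fin (k / 2) → Fin n :=
  fun j x => Is (j + 1) (σ j x)

/-- A canonical basepoint in each fiber of `Jmap`. -/
noncomputable def base (J : Fin (2 * l) → Fin d × Fin (k / 2) → Fin n)
    (h : ∃ σ, Jmap Is σ = J) : Fin (2 * l) → Equiv.Perm (Fin d × Fin (k / 2)) :=
  Classical.choose h

lemma base_spec (J : Fin (2 * l) → Fin d × Fin (k / 2) → Fin n)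
    (h : ∃ σ, Jmap Is σ = J) : Jmap Is (base Is J h) = J :=
  Classical.choose_spec h

lemma base_congr (J J' : Fin (2 * l) → Fin d × Fin (k / 2) → Fin n) (hJJ : J = J')
    (h1 : ∃ σ, Jmap Is σ = J) (h2 : ∃ σ, Jmap Is σ = J') :
    base Is J h1 = base Is J' h2 := by
  subst hJJ; rfl

/-- The "relative" permutation `σ_j ∘ (base)⁻¹`, which preserves fibers of `I_{j+1}`. -/
noncomputable def tau (σ : Fin (2 * l) → Equiv.Perm (Fin d × Fin (k / 2)))
    (j : Fin (2 * l)) : Equiv.Perm (Fin d × Fin (k / 2)) :=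
  σ j * (base Is (Jmap Is σ) ⟨σ, rfl⟩ j)⁻¹

lemma tau_fiber (σ : Fin (2 * l) → Equiv.Perm (Fin d × Fin (k / 2)))
    (j : Fin (2 * l)) (x : Fin d × Fin (k / 2)) :
    Is (j + 1) (tau Is σ j x) = Is (j + 1) x := by
  have h := congrFun (congrFun (base_spec Is (Jmap Is σ) ⟨σ, rfl⟩) j)
      ((base Is (Jmap Is σ) ⟨σ, rfl⟩ j)⁻¹ x)
  simpa [Jmap, tau] using h.symm

/-- The fiberwise restriction data of `tau`. -/
noncomputable def hmap (σ : Fin (2 * l) → Equiv.Perm (Fin d × Fin (k / 2)))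
    (j : Fin (2 * l)) (i : Fin n) :
    Equiv.Perm {x : Fin d × Fin (k / 2) // Is (j + 1) x = i} :=
  (tau Is σ j).subtypePerm (fun x => by rw [tau_fiber Is σ j x])

/-- The class-representative data of `σ`. -/
noncomputable def gmap (Q : Setoid (Fin (2 * l) × Fin d))
    (σ : Fin (2 * l) → Equiv.Perm (Fin d × Fin (k / 2)))
    (c : Quotient Q) : Fin (k / 2) → Fin d × Fin (k / 2) :=
  fun t => σ c.out.1 (c.out.2, t)

lemma main_inj (Q : Setoid (Fin (2 * l) × Fin d))
    (σ σ' : Fin (2 * l) → Equiv.Perm (Fin d × Fin (k / 2)))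
    (hσ : Par Is σ = Q) (hσ' : Par Is σ' = Q)
    (hg : gmap Q σ = gmap Q σ') (hh : hmap Is σ = hmap Is σ') : σ = σ' := by
  -- Step A: Jmap σ = Jmap σ'
  have hJ : Jmap Is σ = Jmap Is σ' := by
    funext j x
    obtain ⟨s, t⟩ := x
    set p : Fin (2 * l) × Fin d := (j, s) with hp
    set c : Quotient Q := Quotient.mk Q p with hc
    have hrel : Q.r c.out p := Quotient.exact (by rw [Quotient.out_eq])
    have h1 : pairKey Is σ c.out = pairKey Is σ p := by
      have h0 : (Par Is σ) c.out p := by rw [hσ]; exact hrel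
      exact h0
    have h1' : pairKey Is σ' c.out = pairKey Is σ' p := by
      have h0 : (Par Is σ') c.out p := by rw [hσ']; exact hrel
      exact h0
    have hkeyrep : pairKey Is σ c.out = pairKey Is σ' c.out := by
      unfold pairKey
      have := congrFun hg c
      have h2 : (fun t => Is (c.out.1 + 1) (σ c.out.1 (c.out.2, t)))
          = fun t => Is (c.out.1 + 1) (σ' c.out.1 (c.out.2, t)) := by
        funext t; rw [show σ c.out.1 (c.out.2, t) = σ' c.out.1 (c.out.2, t) from
          congrFun this t]
      rw [h2]
    have hkey : pairKey Is σ p = pairKey Is σ' p := by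
      rw [← h1, ← h1', hkeyrep]
    have := Sym2.congr_right.mp (show s(_, _) = s(_, _) from hkey)
    exact congrFun this t
  have hb : base Is (Jmap Is σ) ⟨σ, rfl⟩ = base Is (Jmap Is σ') ⟨σ', rfl⟩ :=
    base_congr Is _ _ hJ _ _
  have htau : ∀ j, tau Is σ j = tau Is σ' j := by
    intro j
    refine Equiv.ext fun x => ?_
    have h3 := congrFun (congrFun hh j) (Is (j + 1) x)
    have h5 : (hmap Is σ j (Is (j + 1) x)) ⟨x, rfl⟩
        = (hmap Is σ' j (Is (j + 1) x)) ⟨x, rfl⟩ := by rw [h3]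
    simpa [hmap, Equiv.Perm.subtypePerm_apply, Subtype.ext_iff] using h5
  funext j
  have e1 : σ j = tau Is σ j * base Is (Jmap Is σ) ⟨σ, rfl⟩ j := by
    simp [tau, mul_assoc]
  have e2 : σ' j = tau Is σ' j * base Is (Jmap Is σ') ⟨σ', rfl⟩ j := by
    simp [tau, mul_assoc]
  rw [e1, e2, htau j, hb]

end Aux

/-- For an even partition `Q` with `M` blocks and a `Q`-valid collection `{I_j}`,
the number of collections `{σ_j}` with `Par({I_j},{id},{σ_j}) = Q` is at most
`(kd/2)^{kM/2} · ∏_j hist(I_j)!`. -/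
theorem card_sigma_le {n k d l M : ℕ} [NeZero (2 * l)] (hk : Even k)
    (Q : Setoid (Fin (2 * l) × Fin d))
    (hQeven : ∀ a, Even (Nat.card {b // Q.r a b}))
    (hM : Nat.card (Quotient Q) = M)
    (Is : Fin (2 * l) → (Fin d × Fin (k / 2) → Fin n))
    (hvalid : ∃ σ : Fin (2 * l) → Equiv.Perm (Fin d × Fin (k / 2)), Par Is σ = Q) :
    Nat.card {σ : Fin (2 * l) → Equiv.Perm (Fin d × Fin (k / 2)) // Par Is σ = Q} ≤
      (k * d / 2) ^ (k * M / 2) * ∏ j, histFact (Is j) := by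
  obtain ⟨m, hm⟩ := hk
  have hk2 : k / 2 = m := by omega
  have hm' := hm
  have hkd : k * d / 2 = m * d := by
    subst hm; rw [show (m + m) * d = 2 * (m * d) from by ring]; omega
  have hkM : k * M / 2 = m * M := by
    subst hm; rw [show (m + m) * M = 2 * (m * M) from by ring]; omega
  set T := (Quotient Q → (Fin (k / 2) → Fin d × Fin (k / 2))) ×
      (∀ j : Fin (2 * l), ∀ i : Fin n,
        Equiv.Perm {x : Fin d × Fin (k / 2) // Is (j + 1) x = i}) with hT
  have hinj : Function.Injective
      (fun σ : {σ : Fin (2 * l) → Equiv.Perm (Fin d × Fin (k / 2)) // Par Is σ = Q} =>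
        ((gmap Q σ.1, hmap Is σ.1) : T)) := by
    rintro ⟨σ, hσ⟩ ⟨σ', hσ'⟩ hEq
    simp only [Prod.mk.injEq] at hEq
    exact Subtype.ext (main_inj Is Q σ σ' hσ hσ' hEq.1 hEq.2)
  have hle := Nat.card_le_card_of_injective _ hinj
  refine hle.trans ?_
  have hcardT : Nat.card T =
      ((d * (k / 2)) ^ (k / 2)) ^ M *
        ∏ j : Fin (2 * l), histFact (Is (j + 1)) := by
    rw [hT, Nat.card_prod]
    congr 1
    · rw [Nat.card_fun, hM]
      congr 1
      simp [Nat.card_eq_fintype_card]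
    · rw [Nat.card_pi]
      refine Finset.prod_congr rfl fun j _ => ?_
      rw [Nat.card_pi, histFact]
      refine Finset.prod_congr rfl fun i _ => ?_
      rw [Nat.card_eq_fintype_card, Fintype.card_perm, Fintype.card_subtype]
  rw [hcardT]
  have hprod : ∏ j : Fin (2 * l), histFact (Is (j + 1)) = ∏ j, histFact (Is j) :=
    Fintype.prod_equiv (Equiv.addRight (1 : Fin (2 * l)))
      (fun j => histFact (Is (j + 1))) (fun j => histFact (Is j)) (fun j => rfl)
  have hpow : ((d * (k / 2)) ^ (k / 2)) ^ M = (k * d / 2) ^ (k * M / 2) := by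
    rw [hk2, hkd, hkM, ← pow_mul, Nat.mul_comm d m]
  rw [hprod, hpow]
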